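/- Let φ : ℝⁿ → ℝᵖ be twice continuously differentiable. Its hyper-dual extension satisfies φ̃(y + vε₁ + wε₂ + uε₁₂) = φ(y) + Dφ(y)[v]ε₁ + Dφ(y)[w]ε₂ + (D²φ(y)[v,w] + Dφ(y)[u])ε₁₂, and this extension is functorial under composition: for ψ twice continuously differentiable on the range of φ, ψ̃ ∘ φ̃ equals the hyper-dual extension of ψ ∘ φ. -/

import Mathlib

/-- The hyper-dual extension of a map `φ`: it sends
`y + vε₁ + wε₂ + uε₁₂` (encoded as the quadruple `(y, v, w, u)`) to
`φ(y) + Dφ(y)[v]ε₁ + Dφ(y)[w]ε₂ + (D²φ(y)[v,w] + Dφ(y)[u])ε₁₂`. -/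
noncomputable def hyperExt {E F : Type*} [NormedAddCommGroup E] [NormedSpace ℝ E]
    [NormedAddCommGroup F] [NormedSpace ℝ F] (φ : E → F)
    (z : E × E × E × E) : F × F × F × F :=
  (φ z.1, fderiv ℝ φ z.1 z.2.1, fderiv ℝ φ z.1 z.2.2.1,
    fderiv ℝ (fderiv ℝ φ) z.1 z.2.1 z.2.2.1 + fderiv ℝ φ z.1 z.2.2.2)

/-- Second-order chain rule. -/
theorem second_chain {E F G : Type*} [NormedAddCommGroup E] [NormedSpace ℝ E]
    [NormedAddCommGroup F] [NormedSpace ℝ F]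
    [NormedAddCommGroup G] [NormedSpace ℝ G]
    (φ : E → F) (ψ : F → G) (hφ : ContDiff ℝ 2 φ) (hψ : ContDiff ℝ 2 ψ)
    (y : E) (v w : E) :
    fderiv ℝ (fderiv ℝ (ψ ∘ φ)) y v w
      = fderiv ℝ (fderiv ℝ ψ) (φ y) (fderiv ℝ φ y v) (fderiv ℝ φ y w)
        + fderiv ℝ ψ (φ y) (fderiv ℝ (fderiv ℝ φ) y v w) := by
  have hφ1 : Differentiable ℝ φ := hφ.differentiable two_ne_zero
  have hψ1 : Differentiable ℝ ψ := hψ.differentiable two_ne_zero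
  have hφ2 : Differentiable ℝ (fderiv ℝ φ) :=
    (hφ.fderiv_right (m := 1) (by norm_num)).differentiable one_ne_zero
  have hψ2 : Differentiable ℝ (fderiv ℝ ψ) :=
    (hψ.fderiv_right (m := 1) (by norm_num)).differentiable one_ne_zero
  have hc : HasFDerivAt (fun x => fderiv ℝ ψ (φ x))
      ((fderiv ℝ (fderiv ℝ ψ) (φ y)).comp (fderiv ℝ φ y)) y :=
    (hψ2 (φ y)).hasFDerivAt.comp y (hφ1 y).hasFDerivAt
  have hd : HasFDerivAt (fderiv ℝ φ) (fderiv ℝ (fderiv ℝ φ) y) y := (hφ2 y).hasFDerivAt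
  have h2 := hc.clm_comp hd
  have hfun : fderiv ℝ (ψ ∘ φ) = fun x => (fderiv ℝ ψ (φ x)).comp (fderiv ℝ φ x) :=
    funext fun x => fderiv_comp x (hψ1 (φ x)) (hφ1 x)
  have key : fderiv ℝ (fderiv ℝ (ψ ∘ φ)) y
      = ((ContinuousLinearMap.compL ℝ E F G (fderiv ℝ ψ (φ y))).comp
            (fderiv ℝ (fderiv ℝ φ) y)
          + ((ContinuousLinearMap.compL ℝ E F G).flip (fderiv ℝ φ y)).comp
            ((fderiv ℝ (fderiv ℝ ψ) (φ y)).comp (fderiv ℝ φ y))) := by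
    rw [hfun]; exact h2.fderiv
  rw [key]
  simp [ContinuousLinearMap.add_apply, ContinuousLinearMap.comp_apply,
    ContinuousLinearMap.flip_apply, add_comm]

/-- For twice continuously differentiable `φ : ℝⁿ → ℝᵖ` the
hyper-dual extension satisfies
`φ̃(y + vε₁ + wε₂ + uε₁₂) = φ(y) + Dφ(y)[v]ε₁ + Dφ(y)[w]ε₂ + (D²φ(y)[v,w] + Dφ(y)[u])ε₁₂`,
and the extension is functorial under composition: for twice continuously
differentiable `ψ : ℝᵖ → ℝ^q`, `ψ̃ ∘ φ̃` equals the hyper-dual extension of `ψ ∘ φ`. -/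
theorem hyperExt_comp {n p q : ℕ}
    (φ : (Fin n → ℝ) → (Fin p → ℝ)) (ψ : (Fin p → ℝ) → (Fin q → ℝ))
    (hφ : ContDiff ℝ 2 φ) (hψ : ContDiff ℝ 2 ψ) :
    (∀ y v w u : Fin n → ℝ,
      hyperExt φ (y, v, w, u)
        = (φ y, fderiv ℝ φ y v, fderiv ℝ φ y w,
            fderiv ℝ (fderiv ℝ φ) y v w + fderiv ℝ φ y u)) ∧
    (∀ y v w u : Fin n → ℝ,
      hyperExt ψ (hyperExt φ (y, v, w, u)) = hyperExt (ψ ∘ φ) (y, v, w, u)) := by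
  have hφ1 : Differentiable ℝ φ := hφ.differentiable two_ne_zero
  have hψ1 : Differentiable ℝ ψ := hψ.differentiable two_ne_zero
  refine ⟨fun y v w u => rfl, fun y v w u => ?_⟩
  have hcomp : ∀ x, fderiv ℝ (ψ ∘ φ) x = (fderiv ℝ ψ (φ x)).comp (fderiv ℝ φ x) :=
    fun x => fderiv_comp x (hψ1 (φ x)) (hφ1 x)
  simp only [hyperExt]
  refine Prod.ext rfl (Prod.ext ?_ (Prod.ext ?_ ?_))
  · simp [hcomp y]
  · simp [hcomp y]
  · simp only [second_chain φ ψ hφ hψ y v w, hcomp y, map_add,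
      ContinuousLinearMap.comp_apply]
    abel
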